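/- Let N be a natural number and a_1, …, a_n nonnegative integers with n ≥ N. Let c_j = e_j(a_1,…,a_n) be the j-th elementary symmetric function of the a_i. Then ∑_{i=1}^n C(a_i+N, N) = (1/N!)·∑_{k=1}^{N} ⟦N+1, k+1⟧ det(M_k)(c_1,…,c_k) + n, where M_k is the k×k matrix with first column (c_1, 2c_2, …, kc_k)^T, 1's on the superdiagonal, entries c_{i-j+1} for columns j ≥ 2 (with c_0 = 1, c_m = 0 for m < 0), and ⟦·,·⟧ denotes unsigned Stirling numbers of the first kind. -/

import Mathlib

open Finset

def esymm {R : Type*} [CommRing R] (n j : ℕ) (x : ℕ → R) : R :=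
  ∑ s ∈ Finset.powersetCard j (Finset.range n), ∏ i ∈ s, x i

lemma aeval_esymm (n j : ℕ) (x : ℕ → ℚ) :
    MvPolynomial.aeval (fun i : Fin n => x i) (MvPolynomial.esymm (Fin n) ℚ j) = esymm n j x := by
  rw [MvPolynomial.esymm, esymm, ← Nat.Iio_eq_range, ← Fin.map_valEmbedding_univ,
    Finset.powersetCard_map, Finset.sum_map]
  simp only [map_sum, map_prod, MvPolynomial.aeval_X]
  refine Finset.sum_congr rfl fun s _ => ?_
  rw [show ((Finset.mapEmbedding Fin.valEmbedding).toEmbedding s) = s.map Fin.valEmbedding from rfl, Finset.prod_map]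
  rfl

lemma aeval_psum (n k : ℕ) (x : ℕ → ℚ) :
    MvPolynomial.aeval (fun i : Fin n => x i) (MvPolynomial.psum (Fin n) ℚ k) =
      ∑ i ∈ range n, x i ^ k := by
  rw [MvPolynomial.psum]
  simp only [map_sum, map_pow, MvPolynomial.aeval_X]
  exact Fin.sum_univ_eq_sum_range (fun i => x i ^ k) n

lemma newton (n k : ℕ) (x : ℕ → ℚ) :
    ∑ i ∈ range n, x i ^ (k+1) =
      (-1)^(k+2) * (k+1) * esymm n (k+1) x -
        ∑ j ∈ range k, (-1)^(k-j) * esymm n (k-j) x * ∑ i ∈ range n, x i ^ (j+1) := by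
  have h := congrArg (MvPolynomial.aeval (fun i : Fin n => x i))
    (MvPolynomial.psum_eq_mul_esymm_sub_sum (Fin n) ℚ (k+1) (Nat.succ_pos k))
  simp only [map_sub, map_mul, map_sum, map_pow, map_neg, map_one, map_natCast,
    aeval_esymm, aeval_psum] at h
  rw [h]
  congr 1
  · push_cast; ring
  rw [Finset.sum_filter, Finset.Nat.sum_antidiagonal_eq_sum_range_succ_mk,
    ← Finset.sum_range_reflect]
  simp only [Nat.succ_sub_one]
  rw [Finset.sum_range_succ, Finset.sum_range_succ']
  have h1 : ∀ j ∈ range k,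
      (if (k + 1 - (j+1), k + 1 - (k + 1 - (j+1))).1 ∈ Set.Ioo 0 (k+1) then
        (-1:ℚ) ^ (k + 1 - (j+1), k + 1 - (k + 1 - (j+1))).1 *
          esymm n (k + 1 - (j+1), k + 1 - (k + 1 - (j+1))).1 x *
          ∑ i ∈ range n, x i ^ (k + 1 - (j+1), k + 1 - (k + 1 - (j+1))).2 else 0)
      = (-1:ℚ)^(k-j) * esymm n (k-j) x * ∑ i ∈ range n, x i ^ (j+1) := by
    intro j hj
    rw [Finset.mem_range] at hj
    have e1 : k + 1 - (j+1) = k - j := by omega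
    have e2 : k + 1 - (k - j) = j + 1 := by omega
    rw [e1]
    rw [e2]
    rw [if_pos (by simp [Set.mem_Ioo]; omega)]
  rw [Finset.sum_congr rfl h1]
  have e3 : k + 1 - (k + 1 - 0) = 0 := by omega
  have e4 : (k+1) + 1 - 1 - k = 1 := by omega
  simp [e3, e4]

def matM {R : Type*} [CommRing R] (n : ℕ) (x : ℕ → R) (r : ℕ) :
    Matrix (Fin r) (Fin r) R :=
  fun i j =>
    if (j : ℕ) = 0 then ((i : ℕ) + 1 : ℕ) * esymm n ((i : ℕ) + 1) x
    else if (i : ℕ) + 1 < (j : ℕ) then 0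
    else esymm n ((i : ℕ) + 1 - (j : ℕ)) x

lemma esymm_zero' (n : ℕ) (x : ℕ → ℚ) : esymm n 0 x = 1 := by simp [esymm]

lemma esymm_one' (n : ℕ) (x : ℕ → ℚ) : esymm n 1 x = ∑ i ∈ range n, x i := by
  rw [← aeval_esymm, MvPolynomial.esymm_one]
  simp only [map_sum, MvPolynomial.aeval_X]
  exact Fin.sum_univ_eq_sum_range (fun i => x i) n

lemma matM_val_eq (n : ℕ) (x : ℕ → ℚ) {r r' : ℕ} (i : Fin r) (j : Fin r)
    (i' : Fin r') (j' : Fin r') (hi : (i:ℕ) = (i':ℕ)) (hj : (j:ℕ) = (j':ℕ)) :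
    matM n x r i j = matM n x r' i' j' := by
  simp only [matM, hi, hj]

lemma succAbove_val {m : ℕ} (j : Fin (m+3)) (hj : (j:ℕ) < m + 2) (c : Fin (m+1)) :
    ((j.succAbove (Fin.castSucc c)) : ℕ) =
      (((⟨(j:ℕ), hj⟩ : Fin (m+2)).succAbove c) : ℕ) := by
  rcases lt_or_ge (c:ℕ) (j:ℕ) with h | h
  · rw [Fin.succAbove_of_castSucc_lt, Fin.succAbove_of_castSucc_lt] <;>
      simp [Fin.lt_def, h]
  · rw [Fin.succAbove_of_le_castSucc, Fin.succAbove_of_le_castSucc] <;>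
      simp [Fin.le_def, h]

lemma minor_det (n : ℕ) (x : ℕ → ℚ) : ∀ m (j : Fin (m+2)),
    ((matM n x (m+2)).submatrix Fin.castSucc j.succAbove).det = (matM n x (j:ℕ)).det := by
  intro m
  induction m with
  | zero =>
    intro j
    match j, (Fin.is_le j : (j:ℕ) ≤ 1) with
    | ⟨0, _⟩, _ =>
      rw [Matrix.det_fin_one]
      have h1 : (((⟨0, by omega⟩ : Fin 2).succAbove 0) : ℕ) = 1 := rfl
      simp [Matrix.submatrix_apply, matM, h1, esymm_zero', Matrix.det_fin_zero]
    | ⟨1, _⟩, _ =>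
      rw [show (⟨1, by omega⟩ : Fin 2) = Fin.last 1 from rfl, Fin.succAbove_last]
      rw [Matrix.det_fin_one, Matrix.det_fin_one]
      simp only [Matrix.submatrix_apply]
      exact matM_val_eq n x _ _ _ _ rfl rfl
  | succ m ih =>
    intro j
    by_cases hj : (j:ℕ) = m + 2
    · have hjl : j = Fin.last (m+2) := Fin.ext hj
      subst hjl
      rw [Fin.succAbove_last]
      have : (matM n x (m+3)).submatrix Fin.castSucc Fin.castSucc
          = matM n x (m+2) := by
        ext i c
        exact matM_val_eq n x _ _ _ _ rfl rfl
      rw [this]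
      congr
    · have hj' : (j:ℕ) < m + 2 := by omega
      set A := (matM n x (m+3)).submatrix Fin.castSucc j.succAbove with hA
      rw [Matrix.det_succ_column A (Fin.last (m+1))]
      have hcol : ∀ i : Fin (m+2), A i (Fin.last (m+1)) =
          if (i:ℕ) = m + 1 then 1 else 0 := by
        intro i
        have hsc : (j.succAbove (Fin.last (m+1)) : ℕ) = m + 2 := by
          rw [Fin.succAbove_of_le_castSucc]
          · rfl
          · rw [Fin.le_def]; simpa using by omega
        simp only [hA, Matrix.submatrix_apply, matM]
        rw [hsc]
        by_cases hi : (i:ℕ) = m + 1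
        · simp [hi, esymm_zero']
        · have : (Fin.castSucc i : ℕ) + 1 < m + 2 := by
            have := i.isLt; simp [Fin.coe_castSucc]; omega
          simp only [Fin.coe_castSucc]
          rw [if_neg (by omega), if_pos (by omega), if_neg hi]
      rw [Finset.sum_eq_single (Fin.last (m+1))]
      · rw [hcol]
        simp only [Fin.val_last]
        rw [if_pos trivial]
        have hsub : A.submatrix (Fin.last (m+1)).succAbove (Fin.last (m+1)).succAbove
            = (matM n x (m+2)).submatrix Fin.castSucc
              ((⟨(j:ℕ), hj'⟩ : Fin (m+2)).succAbove) := by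
          rw [Fin.succAbove_last]
          ext i c
          simp only [hA, Matrix.submatrix_apply]
          exact matM_val_eq n x _ _ _ _ rfl (succAbove_val j hj' c)
        rw [hsub, ih ⟨(j:ℕ), hj'⟩]
        simp [Fin.last]
      · intro b _ hb
        rw [hcol, if_neg (fun h => hb (Fin.ext (by simpa using h)))]
        ring
      · intro h
        exact absurd (Finset.mem_univ _) h

lemma det_matM (n : ℕ) (x : ℕ → ℚ) : ∀ k, (matM n x (k+1)).det = ∑ i ∈ range n, x i ^ (k+1) := by
  intro k
  induction k using Nat.strong_induction_on with
  | _ k ih =>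
    match k, ih with
    | 0, _ =>
      rw [Matrix.det_fin_one]
      simp [matM, esymm_one']
    | (m+1), ih =>
      set F : ℕ → ℚ := fun c =>
        (-1)^(m+1+c) * (if c = 0 then ((m+2:ℕ):ℚ) * esymm n (m+2) x
          else esymm n (m+2-c) x) * (matM n x c).det with hF
      have hdet : (matM n x (m+1+1)).det = ∑ c ∈ range (m+2), F c := by
        rw [Matrix.det_succ_row (matM n x (m+2)) (Fin.last (m+1)),
          ← Fin.sum_univ_eq_sum_range F (m+2)]
        refine Finset.sum_congr rfl fun c _ => ?_
        rw [show (Fin.last (m+1)).succAbove = Fin.castSucc from Fin.succAbove_last,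
          minor_det n x m c, hF]
        simp only [Fin.val_last]
        congr 1
        congr 1
        simp only [matM, Fin.val_last]
        by_cases h : (c:ℕ) = 0
        · rw [if_pos h, if_pos h]
        · have hc := c.isLt
          rw [if_neg h, if_neg h, if_neg (by omega)]
      rw [hdet, Finset.sum_range_succ', newton n (m+1) x]
      have h0 : F 0 = (-1:ℚ)^(m+1+2) * ((m+1:ℚ)+1) * esymm n (m+1+1) x := by
        rw [hF]
        simp only [if_pos rfl]
        rw [show (matM n x 0).det = 1 from Matrix.det_fin_zero]
        have : (-1:ℚ)^(m+1+2) = (-1)^(m+1) := by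
          rw [show m+1+2 = (m+1)+2 from rfl, pow_add]; norm_num
        rw [this]
        push_cast
        ring
      have hj : ∀ j ∈ range (m+1), F (j+1) =
          -((-1:ℚ)^(m+1-j) * esymm n (m+1-j) x * ∑ i ∈ range n, x i ^ (j+1)) := by
        intro j hjm
        rw [Finset.mem_range] at hjm
        rw [hF]
        simp only []
        rw [if_neg (by omega), ih j (by omega)]
        have e1 : m + 2 - (j+1) = m + 1 - j := by omega
        have e2 : m + 1 + (j+1) = (m+1-j) + (2*j+1) := by omega
        rw [e1, e2, pow_add, pow_add, pow_mul, neg_one_sq, one_pow, pow_one]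
        ring
      rw [Finset.sum_congr rfl hj, h0]
      rw [Finset.sum_neg_distrib]
      push_cast
      ring

def stirling1 : ℕ → ℕ → ℕ
  | 0, 0 => 1
  | 0, _ + 1 => 0
  | _ + 1, 0 => 0
  | n + 1, m + 1 => stirling1 n m + n * stirling1 n (m + 1)

lemma stirling1_eq_zero : ∀ {n m : ℕ}, n < m → stirling1 n m = 0 := by
  intro n
  induction n with
  | zero => intro m h; match m, h with | (k+1), _ => rfl
  | succ n ih =>
    intro m h
    match m, h with
    | (k+1), h =>
      show stirling1 n k + n * stirling1 n (k+1) = 0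
      rw [ih (by omega), ih (by omega)]
      simp

lemma stirling1_one (n : ℕ) : stirling1 (n+1) 1 = n.factorial := by
  induction n with
  | zero => rfl
  | succ n ih =>
    show stirling1 (n+1) 0 + (n+1) * stirling1 (n+1) 1 = (n+1).factorial
    rw [ih, show stirling1 (n+1) 0 = 0 from rfl, Nat.factorial_succ]
    ring

lemma asc_eq_stirling (N : ℕ) (y : ℚ) :
    ∏ j ∈ range N, (y + j + 1) = ∑ k ∈ range (N+1), (stirling1 (N+1) (k+1) : ℚ) * y^k := by
  induction N with
  | zero => simp [stirling1]
  | succ N ihN =>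
    rw [Finset.prod_range_succ, ihN]
    have hrec : ∀ k, (stirling1 (N+2) (k+1) : ℚ) =
        (stirling1 (N+1) k : ℚ) + ((N:ℚ)+1) * (stirling1 (N+1) (k+1) : ℚ) := by
      intro k
      rw [show stirling1 (N+2) (k+1) = stirling1 (N+1) k + (N+1) * stirling1 (N+1) (k+1) from rfl]
      push_cast; ring
    have key : ∑ k ∈ range (N+2), (stirling1 (N+2) (k+1) : ℚ) * y^k
        = (∑ k ∈ range (N+1), (stirling1 (N+1) (k+1) : ℚ) * y^k) * y
          + ((N:ℚ)+1) * ∑ k ∈ range (N+1), (stirling1 (N+1) (k+1) : ℚ) * y^k := by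
      have hterm : ∀ k, (stirling1 (N+2) (k+1) : ℚ) * y^k
          = (stirling1 (N+1) k : ℚ) * y^k
            + ((N:ℚ)+1) * ((stirling1 (N+1) (k+1) : ℚ) * y^k) := by
        intro k; rw [hrec]; ring
      rw [Finset.sum_congr rfl fun k _ => hterm k, Finset.sum_add_distrib, ← Finset.mul_sum]
      congr 1
      · rw [Finset.sum_range_succ', show stirling1 (N+1) 0 = 0 from rfl, Finset.sum_mul]
        simp only [Nat.cast_zero, zero_mul, add_zero, pow_zero, mul_one]
        exact Finset.sum_congr rfl fun k _ => by ring
      · rw [Finset.sum_range_succ, stirling1_eq_zero (by omega)]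
        simp
    rw [show N+1+1 = N+2 from rfl, key]
    push_cast
    ring

lemma choose_eq_prod (N a : ℕ) :
    ((a+N).choose N : ℚ) * N.factorial = ∏ j ∈ range N, ((a:ℚ) + j + 1) := by
  have hasc : ∀ M : ℕ, ∏ j ∈ range M, ((a:ℚ) + j + 1) = ((a+1).ascFactorial M : ℚ) := by
    intro M
    induction M with
    | zero => simp
    | succ M ih =>
      rw [Finset.prod_range_succ, ih, Nat.ascFactorial_succ]
      push_cast; ring
  rw [hasc N]
  have h1 := Nat.add_choose_mul_factorial_mul_factorial a N
  have h2 := Nat.factorial_mul_ascFactorial a N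
  have key : (a + N).choose N * N.factorial * a.factorial
      = (a+1).ascFactorial N * a.factorial := by
    rw [Nat.mul_comm ((a+1).ascFactorial N), h2, ← h1]; ring
  have hfa : (a.factorial : ℚ) ≠ 0 := by exact_mod_cast a.factorial_ne_zero
  apply mul_right_cancel₀ hfa
  exact_mod_cast congrArg (Nat.cast : ℕ → ℚ) key

theorem euler_char_split_chern (N n : ℕ) (hn : N ≤ n) (a : ℕ → ℕ) :
    (∑ i ∈ Finset.range n, ((a i + N).choose N : ℚ)) =
      (1 / (N.factorial : ℚ)) *
        (∑ k ∈ Finset.Icc 1 N, (stirling1 (N + 1) (k + 1) : ℚ) *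
          (matM n (fun i => (a i : ℚ)) k).det) + n := by
  have hfac : (N.factorial : ℚ) ≠ 0 := by exact_mod_cast N.factorial_ne_zero
  set x : ℕ → ℚ := fun i => (a i : ℚ) with hx
  have hchoose : ∀ i, ((a i + N).choose N : ℚ) =
      (1 / (N.factorial : ℚ)) * ∑ k ∈ range (N+1), (stirling1 (N+1) (k+1) : ℚ) * x i ^ k := by
    intro i
    rw [← asc_eq_stirling, ← choose_eq_prod]
    field_simp
  calc ∑ i ∈ range n, ((a i + N).choose N : ℚ)
      = (1 / (N.factorial : ℚ)) *
          ∑ i ∈ range n, ∑ k ∈ range (N+1), (stirling1 (N+1) (k+1) : ℚ) * x i ^ k := by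
        rw [Finset.mul_sum]
        exact Finset.sum_congr rfl fun i _ => hchoose i
    _ = (1 / (N.factorial : ℚ)) *
          ∑ k ∈ range (N+1), (stirling1 (N+1) (k+1) : ℚ) * ∑ i ∈ range n, x i ^ k := by
        rw [Finset.sum_comm]
        congr 1
        exact Finset.sum_congr rfl fun k _ => (Finset.mul_sum _ _ _).symm
    _ = (1 / (N.factorial : ℚ)) *
          ((∑ k ∈ range N, (stirling1 (N+1) (k+2) : ℚ) * (matM n x (k+1)).det)
            + (N.factorial : ℚ) * n) := by
        rw [Finset.sum_range_succ']
        congr 1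
        congr 1
        · refine Finset.sum_congr rfl fun k _ => ?_
          rw [det_matM n x k]
        · rw [stirling1_one]
          simp
    _ = (1 / (N.factorial : ℚ)) *
          (∑ k ∈ Finset.Icc 1 N, (stirling1 (N + 1) (k + 1) : ℚ) * (matM n x k).det) + n := by
        have hIcc : ∑ k ∈ Finset.Icc 1 N, (stirling1 (N + 1) (k + 1) : ℚ) * (matM n x k).det
            = ∑ k ∈ range N, (stirling1 (N+1) (k+2) : ℚ) * (matM n x (k+1)).det := by
          rw [← Finset.Ico_add_one_right_eq_Icc, Finset.sum_Ico_eq_sum_range]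
          refine Finset.sum_congr (by norm_num) fun k _ => ?_
          rw [show 1+k = k+1 from by omega]
        rw [hIcc]
        field_simp
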